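/- Let 0 < V₁ < V₂ < ⋯ < V_m be real numbers, set V₀ = 0, let q_i = 1 − V_{i−1}/V_i for i = 1, …, m (so q₁ = 1), and let q = Σ_{i=1}^m q_i. Define Q_0 = 0 and Q_i = (Σ_{j=1}^i q_j)/q. Then Q_m = 1, Q is strictly increasing, and for every i ∈ {1, …, m}: Σ_{j=1}^{i} (Q_j − Q_{j−1})·V_j = V_i/q. -/

import Mathlib

open Real Set Finset

theorem stmt_9 (m : ℕ) (hm : 1 ≤ m) (V : ℕ → ℝ)
    (hV0 : V 0 = 0)
    (hVpos : ∀ i, 1 ≤ i → i ≤ m → 0 < V i)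
    (hVmono : ∀ i, 1 ≤ i → i < m → V i < V (i + 1))
    (q : ℕ → ℝ) (hq : ∀ i, 1 ≤ i → i ≤ m → q i = 1 - V (i - 1) / V i)
    (qtot : ℝ) (hqtot : qtot = ∑ i ∈ Finset.Icc 1 m, q i)
    (Q : ℕ → ℝ) (hQ0 : Q 0 = 0)
    (hQ : ∀ i, 1 ≤ i → i ≤ m → Q i = (∑ j ∈ Finset.Icc 1 i, q j) / qtot) :
    Q m = 1 ∧
    (∀ i j, i ≤ m → j ≤ m → i < j → Q i < Q j) ∧
    (∀ i, 1 ≤ i → i ≤ m →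
      ∑ j ∈ Finset.Icc 1 i, (Q j - Q (j - 1)) * V j = V i / qtot) := by
  have hqpos : ∀ i, 1 ≤ i → i ≤ m → 0 < q i := by
    intro i h1 h2
    rw [hq i h1 h2]
    rcases eq_or_lt_of_le h1 with h | h
    · simp [← h, hV0]
    · have hi2 : 2 ≤ i := h
      have hlt : V (i - 1) < V i := by
        have := hVmono (i - 1) (by omega) (by omega)
        have heq : i - 1 + 1 = i := by omega
        rwa [heq] at this
      have hVipos : 0 < V i := hVpos i h1 h2
      have : V (i - 1) / V i < 1 := (div_lt_one hVipos).mpr hlt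
      linarith
  have hqtotpos : 0 < qtot := by
    rw [hqtot]
    apply Finset.sum_pos
    · intro j hj
      rcases Finset.mem_Icc.mp hj with ⟨ha, hb⟩
      exact hqpos j ha hb
    · exact ⟨1, Finset.mem_Icc.mpr ⟨le_rfl, hm⟩⟩
  have hQ' : ∀ i, i ≤ m → Q i = (∑ j ∈ Finset.Icc 1 i, q j) / qtot := by
    intro i hi
    rcases Nat.eq_zero_or_pos i with h0 | h1
    · subst h0; simp [hQ0]
    · exact hQ i h1 hi
  have hqVtele : ∀ j, 1 ≤ j → j ≤ m → q j * V j = V j - V (j - 1) := by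
    intro j h1 h2
    have hVj : V j ≠ 0 := ne_of_gt (hVpos j h1 h2)
    rw [hq j h1 h2, sub_mul, one_mul, div_mul_cancel₀ _ hVj]
  have hsum : ∀ i, 1 ≤ i → i ≤ m → ∑ j ∈ Finset.Icc 1 i, q j * V j = V i := by
    intro i
    induction i with
    | zero => omega
    | succ n ih =>
      intro h1 h2
      rcases Nat.eq_zero_or_pos n with hn | hn
      · subst hn
        simp [hqVtele 1 le_rfl (by omega), hV0]
      · rw [Finset.sum_Icc_succ_top (by omega : 1 ≤ n + 1), ih hn (by omega),
          hqVtele (n + 1) (by omega) h2]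
        simp
  have hstep : ∀ j, 1 ≤ j → j ≤ m → Q j - Q (j - 1) = q j / qtot := by
    intro j h1 h2
    rw [hQ' j h2, hQ' (j - 1) (by omega), div_sub_div_same]
    congr 1
    have hj : j - 1 + 1 = j := by omega
    have hs := Finset.sum_Icc_succ_top (f := q) (by omega : 1 ≤ j - 1 + 1)
    rw [hj] at hs
    rw [hs]; ring
  refine ⟨?_, ?_, ?_⟩
  · rw [hQ m hm le_rfl, ← hqtot, div_self (ne_of_gt hqtotpos)]
  · intro i j hi hj hij
    rw [hQ' i hi, hQ' j hj]
    have h1j : 1 ≤ j := by omega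
    have hlt : (∑ k ∈ Finset.Icc 1 i, q k) < ∑ k ∈ Finset.Icc 1 j, q k := by
      apply Finset.sum_lt_sum_of_subset
        (Finset.Icc_subset_Icc_right (by omega))
        (Finset.mem_Icc.mpr ⟨h1j, le_rfl⟩)
        (by simp [Finset.mem_Icc]; omega)
        (hqpos j h1j hj)
      intro k hk _
      rcases Finset.mem_Icc.mp hk with ⟨ha, hb⟩
      exact le_of_lt (hqpos k ha (le_trans hb hj))
    exact div_lt_div_of_pos_right hlt hqtotpos
  · intro i h1 h2
    calc ∑ j ∈ Finset.Icc 1 i, (Q j - Q (j - 1)) * V j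
        = ∑ j ∈ Finset.Icc 1 i, q j * V j / qtot := by
          apply Finset.sum_congr rfl
          intro j hj
          rcases Finset.mem_Icc.mp hj with ⟨ha, hb⟩
          rw [hstep j ha (le_trans hb h2)]; ring
      _ = (∑ j ∈ Finset.Icc 1 i, q j * V j) / qtot := by rw [Finset.sum_div]
      _ = V i / qtot := by rw [hsum i h1 h2]
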